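/- Let t_1, t_2, t_3, s_1, s_2, s_3 be real numbers with (t_i, s_i) ≠ (0, 0) for each i, and ε_1, ε_2 nonzero reals satisfying ε_1 t_i t_j + ε_2 s_i s_j = 0 for all i ≠ j in {1,2,3}. Then s_i t_i ≠ 0 for every i, and there exists a real number c with s_i = c·t_i for all i ∈ {1,2,3}. -/
import Mathlib

/-- Auxiliary: under the relations, `a1 ≠ 0`. -/
lemma aux_nonzero (ε₁ ε₂ : ℝ) (hε₁ : ε₁ ≠ 0) (hε₂ : ε₂ ≠ 0)
    (a1 a2 a3 b1 b2 b3 : ℝ)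
    (h1 : ¬ (a1 = 0 ∧ b1 = 0)) (h2 : ¬ (a2 = 0 ∧ b2 = 0)) (h3 : ¬ (a3 = 0 ∧ b3 = 0))
    (h12 : ε₁ * (a1 * a2) + ε₂ * (b1 * b2) = 0)
    (h13 : ε₁ * (a1 * a3) + ε₂ * (b1 * b3) = 0)
    (h23 : ε₁ * (a2 * a3) + ε₂ * (b2 * b3) = 0) : a1 ≠ 0 := by
  intro ha1
  have hb1 : b1 ≠ 0 := fun hb1 => h1 ⟨ha1, hb1⟩
  have hb2 : b2 = 0 := by
    have e : ε₂ * (b1 * b2) = 0 := by rw [ha1] at h12; linarith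
    exact ((mul_eq_zero.mp ((mul_eq_zero.mp e).resolve_left hε₂)).resolve_left hb1)
  have ha2 : a2 ≠ 0 := fun ha2 => h2 ⟨ha2, hb2⟩
  have ha3 : a3 = 0 := by
    have e : ε₁ * (a2 * a3) = 0 := by rw [hb2] at h23; linarith
    exact ((mul_eq_zero.mp ((mul_eq_zero.mp e).resolve_left hε₁)).resolve_left ha2)
  have hb3 : b3 ≠ 0 := fun hb3 => h3 ⟨ha3, hb3⟩
  have e : ε₂ * (b1 * b3) = 0 := by rw [ha1] at h13; linarith
  exact hb3 ((mul_eq_zero.mp ((mul_eq_zero.mp e).resolve_left hε₂)).resolve_left hb1)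

/-- If `(t_i, s_i) ≠ (0,0)` for `i = 1,2,3`, `ε₁, ε₂ ≠ 0`, and
`ε₁ t_i t_j + ε₂ s_i s_j = 0` for all `i ≠ j`, then `s_i t_i ≠ 0` for every `i` and
there is a real `c` with `s_i = c t_i` for all `i`. -/
theorem proportional_of_relations (ε₁ ε₂ : ℝ) (hε₁ : ε₁ ≠ 0) (hε₂ : ε₂ ≠ 0)
    (t s : Fin 3 → ℝ) (hne : ∀ i, ¬ (t i = 0 ∧ s i = 0))
    (h : ∀ i j, i ≠ j → ε₁ * (t i * t j) + ε₂ * (s i * s j) = 0) :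
    (∀ i, s i * t i ≠ 0) ∧ ∃ c : ℝ, ∀ i, s i = c * t i := by
  have h01 := h 0 1 (by decide)
  have h02 := h 0 2 (by decide)
  have h12 := h 1 2 (by decide)
  have hne0 := hne 0
  have hne1 := hne 1
  have hne2 := hne 2
  have ht0 : t 0 ≠ 0 := aux_nonzero ε₁ ε₂ hε₁ hε₂ _ _ _ _ _ _ hne0 hne1 hne2 h01 h02 h12
  have ht1 : t 1 ≠ 0 := aux_nonzero ε₁ ε₂ hε₁ hε₂ (t 1) (t 0) (t 2) (s 1) (s 0) (s 2)
    hne1 hne0 hne2 (by linarith [h01]) h12 h02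
  have ht2 : t 2 ≠ 0 := aux_nonzero ε₁ ε₂ hε₁ hε₂ (t 2) (t 0) (t 1) (s 2) (s 0) (s 1)
    hne2 hne0 hne1 (by linarith [h02]) (by linarith [h12]) h01
  have hs0 : s 0 ≠ 0 := aux_nonzero ε₂ ε₁ hε₂ hε₁ (s 0) (s 1) (s 2) (t 0) (t 1) (t 2)
    (by tauto) (by tauto) (by tauto) (by linarith) (by linarith) (by linarith)
  have hs1 : s 1 ≠ 0 := aux_nonzero ε₂ ε₁ hε₂ hε₁ (s 1) (s 0) (s 2) (t 1) (t 0) (t 2)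
    (by tauto) (by tauto) (by tauto) (by linarith) (by linarith) (by linarith)
  have hs2 : s 2 ≠ 0 := aux_nonzero ε₂ ε₁ hε₂ hε₁ (s 2) (s 0) (s 1) (t 2) (t 0) (t 1)
    (by tauto) (by tauto) (by tauto) (by linarith) (by linarith) (by linarith)
  have key : ε₂ * (s 0)^2 = -ε₁ * (t 0)^2 := by
    have e : (ε₁ * (t 1 * t 2)) * (ε₂ * (s 0)^2 + ε₁ * (t 0)^2) = 0 := by
      linear_combination ε₂ * (s 0)^2 * h12 + ε₁ * (t 0) * (t 2) * h01 -
        ε₂ * (s 0) * (s 1) * h02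
    have hne' : ε₁ * (t 1 * t 2) ≠ 0 := mul_ne_zero hε₁ (mul_ne_zero ht1 ht2)
    have := (mul_eq_zero.mp e).resolve_left hne'
    linarith
  have c1 : s 1 * t 0 = s 0 * t 1 := by
    have eq : (ε₂ * s 0) * (s 1 * t 0) = (ε₂ * s 0) * (s 0 * t 1) := by
      linear_combination t 0 * h01 - t 1 * key
    exact mul_left_cancel₀ (mul_ne_zero hε₂ hs0) eq
  have c2 : s 2 * t 0 = s 0 * t 2 := by
    have eq : (ε₂ * s 0) * (s 2 * t 0) = (ε₂ * s 0) * (s 0 * t 2) := by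
      linear_combination t 0 * h02 - t 2 * key
    exact mul_left_cancel₀ (mul_ne_zero hε₂ hs0) eq
  constructor
  · intro i
    fin_cases i <;> exact mul_ne_zero (by assumption) (by assumption)
  · refine ⟨s 0 / t 0, fun i => ?_⟩
    fin_cases i
    · show s 0 = s 0 / t 0 * t 0
      field_simp
    · show s 1 = s 0 / t 0 * t 1
      field_simp
      linear_combination c1
    · show s 2 = s 0 / t 0 * t 2
      field_simp
      linear_combination c2
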